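/- For every β ∈ (0,1), the function F_l(μ,β) = −(μ·ln((1−μ)·β + μ) + (1−μ)·ln(μ·β + (1−μ))) on [0,1] attains its maximum value −ln((1+β)/2) uniquely at μ = 1/2; that is, F_l(μ,β) ≤ −ln((1+β)/2) for all μ ∈ [0,1], with equality if and only if μ = 1/2. -/
import Mathlib


/-- F_l(μ,β) = −(μ·ln((1−μ)·β + μ) + (1−μ)·ln(μ·β + (1−μ))). -/
noncomputable def Fl (μ β : ℝ) : ℝ :=
  -(μ * Real.log ((1 - μ) * β + μ) + (1 - μ) * Real.log (μ * β + (1 - μ)))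

/-- for every β ∈ (0,1), F_l(·,β) attains its maximum −ln((1+β)/2) on [0,1]
uniquely at μ = 1/2. -/
theorem Fl_le_max_and_eq_iff (β : ℝ) (hβ : β ∈ Set.Ioo (0:ℝ) 1)
    (μ : ℝ) (hμ : μ ∈ Set.Icc (0:ℝ) 1) :
    Fl μ β ≤ -Real.log ((1 + β) / 2) ∧
      (Fl μ β = -Real.log ((1 + β) / 2) ↔ μ = 1 / 2) := by
  obtain ⟨hβ0, hβ1⟩ := hβ
  obtain ⟨hμ0, hμ1⟩ := hμ
  set a : ℝ := (1 - μ) * β + μ with ha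
  set b : ℝ := μ * β + (1 - μ) with hb
  set m : ℝ := (1 + β) / 2 with hm
  have ha0 : 0 < a := by nlinarith
  have hb0 : 0 < b := by nlinarith
  have hm0 : 0 < m := by rw [hm]; linarith
  have h1 : Real.log m - Real.log a ≤ m / a - 1 := by
    have := Real.log_le_sub_one_of_pos (x := m / a) (by positivity)
    rwa [Real.log_div (ne_of_gt hm0) (ne_of_gt ha0)] at this
  have h2 : Real.log m - Real.log b ≤ m / b - 1 := by
    have := Real.log_le_sub_one_of_pos (x := m / b) (by positivity)
    rwa [Real.log_div (ne_of_gt hm0) (ne_of_gt hb0)] at this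
  set D : ℝ := β * (1 - β) * (1 - 2 * μ) ^ 2 / (2 * a * b) with hD
  have hident : μ * (m / a - 1) + (1 - μ) * (m / b - 1) = -D := by
    rw [hD, hm]
    field_simp
    ring
  have hkey : Real.log m + D ≤ μ * Real.log a + (1 - μ) * Real.log b := by
    have t1 : μ * (Real.log m - Real.log a) ≤ μ * (m / a - 1) :=
      mul_le_mul_of_nonneg_left h1 hμ0
    have t2 : (1 - μ) * (Real.log m - Real.log b) ≤ (1 - μ) * (m / b - 1) :=
      mul_le_mul_of_nonneg_left h2 (by linarith)
    nlinarith [hident]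
  have hD0 : 0 ≤ D := by
    rw [hD]
    apply div_nonneg _ (by positivity)
    have : 0 ≤ β * (1 - β) := by nlinarith
    positivity
  constructor
  · rw [Fl]
    have : Real.log m ≤ μ * Real.log a + (1 - μ) * Real.log b := by linarith
    linarith
  · constructor
    · intro heq
      rw [Fl] at heq
      have hDle : D ≤ 0 := by linarith [hkey]
      have hDeq : D = 0 := le_antisymm hDle hD0
      rw [hD] at hDeq
      have hab : (2 * a * b) ≠ 0 := by positivity
      have hnum : β * (1 - β) * (1 - 2 * μ) ^ 2 = 0 :=
        (div_eq_zero_iff.mp hDeq).resolve_right hab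
      have hβpos : 0 < β * (1 - β) := by nlinarith
      have hsq : (1 - 2 * μ) ^ 2 = 0 := by
        rcases mul_eq_zero.mp hnum with h | h
        · exact absurd h (ne_of_gt hβpos)
        · exact h
      have h0 : 1 - 2 * μ = 0 := by
        exact pow_eq_zero_iff (n := 2) (by norm_num) |>.mp hsq
      linarith
    · intro hμeq
      subst hμeq
      rw [Fl]
      have haeq : (1 - (1:ℝ)/2) * β + (1:ℝ)/2 = (1 + β) / 2 := by ring
      have hbeq : (1:ℝ)/2 * β + (1 - (1:ℝ)/2) = (1 + β) / 2 := by ring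
      rw [haeq, hbeq]
      ring
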